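/- Given λ ∈ ℂ and a finite dimensional 𝔞_0-module V̄, the space A ⊗ V̄ (A = ℂ[t,t⁻¹]) becomes an A𝔏-module under t^i·(t^j ⊗ u) = t^{i+j} ⊗ u, d_i·(t^j ⊗ u) = (λ+j)t^{i+j} ⊗ u + t^{i+j} ⊗ (d_i − d_0)·u, and x_s(i)·(t^j ⊗ u) = t^{i+j} ⊗ x_s(i)·u; that is, these formulas define a module over 𝔏̃ = W ⋉ (𝔤⊗A ⊕ A) on which A acts associatively and unitally. -/
import Mathlib


/-!
STATEMENT 12: Given `λ ∈ ℂ` and a finite dimensional `𝔞_0`-module `V̄`, the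
space `A ⊗ V̄` (`A = ℂ[t,t⁻¹]`, realized as `ℤ →₀ V̄` with `t^j ⊗ u` the
single-term element `single j u`) becomes an `A𝔏`-module under
`t^i·(t^j ⊗ u) = t^{i+j} ⊗ u`,
`d_i·(t^j ⊗ u) = (λ+j) t^{i+j} ⊗ u + t^{i+j} ⊗ (d_i − d_0)·u`,
`x_s(i)·(t^j ⊗ u) = t^{i+j} ⊗ x_s(i)·u`;
i.e. these operators satisfy the defining relations of
`𝔏̃ = W ⋉ (𝔤⊗A ⊕ A)` with `A` acting associatively and unitally.

The `𝔞_0`-module `V̄` is given by operators `Dop i` (action of `d_i − d_0`)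
and `Xop s i` (action of `x_s(i)`) satisfying the bracket relations of `𝔞_0`.
-/

variable {S : Type*} {V : Type*} [AddCommGroup V] [Module ℂ V]

/-- Action of `t^i` on `A ⊗ V̄`. -/
noncomputable def Tact (i : ℤ) : Module.End ℂ (ℤ →₀ V) :=
  Finsupp.lsum ℂ fun j : ℤ => Finsupp.lsingle (i + j)

/-- Action of `d_i` on `A ⊗ V̄`. -/
noncomputable def Dact (lam : ℂ) (Dop : ℤ → Module.End ℂ V) (i : ℤ) :
    Module.End ℂ (ℤ →₀ V) :=
  Finsupp.lsum ℂ fun j : ℤ =>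
    (Finsupp.lsingle (i + j)).comp ((lam + (j : ℂ)) • LinearMap.id + Dop i)

/-- Action of `x_s(i)` on `A ⊗ V̄`. -/
noncomputable def Xact (Xop : S → ℤ → Module.End ℂ V) (s : S) (i : ℤ) :
    Module.End ℂ (ℤ →₀ V) :=
  Finsupp.lsum ℂ fun j : ℤ => (Finsupp.lsingle (i + j)).comp (Xop s i)

theorem jet_module_structure (lam : ℂ) (β : S → ℂ) (c : S → S → (S →₀ ℂ))
    [FiniteDimensional ℂ V]
    (Dop : ℤ → Module.End ℂ V) (Xop : S → ℤ → Module.End ℂ V)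
    -- V̄ is an 𝔞₀-module:
    (hDD : ∀ i j : ℤ, ⁅Dop i, Dop j⁆ =
      ((j : ℂ) - (i : ℂ)) • Dop (i + j) - (j : ℂ) • Dop j + (i : ℂ) • Dop i)
    (hDX : ∀ (i : ℤ) (s : S) (k : ℤ), ⁅Dop i, Xop s k⁆ =
      ((k : ℂ) + (i : ℂ) * β s) • Xop s (i + k) - (k : ℂ) • Xop s k)
    (hXX : ∀ (s p : S) (j k : ℤ), ⁅Xop s j, Xop p k⁆ =
      (c s p).sum fun q a => a • Xop q (j + k)) :
    -- A acts associatively and unitally: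
    (∀ i j : ℤ, Tact (V := V) i * Tact j = Tact (i + j)) ∧
    (Tact (V := V) 0 = 1) ∧
    -- the defining relations of 𝔏̃ hold:
    (∀ i j : ℤ, ⁅Dact lam Dop i, Dact lam Dop j⁆ =
      ((j : ℂ) - (i : ℂ)) • Dact lam Dop (i + j)) ∧
    (∀ (i : ℤ) (s : S) (k : ℤ), ⁅Dact lam Dop i, Xact Xop s k⁆ =
      ((k : ℂ) + (i : ℂ) * β s) • Xact Xop s (i + k)) ∧
    (∀ (s p : S) (j k : ℤ), ⁅Xact Xop s j, Xact Xop p k⁆ =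
      ((c s p).sum fun q a => a • Xact Xop q (j + k) : Module.End ℂ (ℤ →₀ V))) ∧
    (∀ i k : ℤ, ⁅Dact lam Dop i, Tact (V := V) k⁆ = (k : ℂ) • Tact (V := V) (i + k)) ∧
    (∀ (s : S) (j k : ℤ), ⁅Xact Xop s j, Tact (V := V) k⁆ = 0) := by
  have hT : ∀ (i j : ℤ) (u : V), Tact (V := V) i (Finsupp.single j u) = Finsupp.single (i+j) u := by
    intro i j u; simp [Tact]
  have hD : ∀ (i j : ℤ) (u : V), Dact lam Dop i (Finsupp.single j u) =
      Finsupp.single (i+j) ((lam + (j:ℂ)) • u + Dop i u) := by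
    intro i j u; simp [Dact]
  have hX : ∀ (s : S) (i j : ℤ) (u : V), Xact Xop s i (Finsupp.single j u) =
      Finsupp.single (i+j) (Xop s i u) := by
    intro s i j u; simp [Xact]
  refine ⟨?_, ?_, ?_, ?_, ?_, ?_, ?_⟩
  · intro i j
    apply Finsupp.lhom_ext; intro k u
    simp only [Module.End.mul_apply, hT]
    congr 1; ring
  · apply Finsupp.lhom_ext; intro k u
    simp [hT]
  · intro i j
    apply Finsupp.lhom_ext; intro k u
    have h := LinearMap.congr_fun (hDD i j) u
    simp only [Ring.lie_def, LinearMap.sub_apply, Module.End.mul_apply, LinearMap.add_apply,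
      LinearMap.smul_apply] at h
    simp only [Ring.lie_def, LinearMap.sub_apply, Module.End.mul_apply, LinearMap.smul_apply,
      hD, map_add, map_smul, Finsupp.smul_single]
    rw [show j + (i + k) = i + (j + k) from by ring, show i + j + k = i + (j + k) from by ring,
      ← Finsupp.single_sub]
    congr 1
    push_cast at h ⊢
    linear_combination (norm := module) h
  · intro i s k
    apply Finsupp.lhom_ext; intro m u
    have h := LinearMap.congr_fun (hDX i s k) u
    simp only [Ring.lie_def, LinearMap.sub_apply, Module.End.mul_apply, LinearMap.add_apply,
      LinearMap.smul_apply] at h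
    simp only [Ring.lie_def, LinearMap.sub_apply, Module.End.mul_apply, LinearMap.smul_apply,
      hD, hX, map_add, map_smul, Finsupp.smul_single]
    rw [show k + (i + m) = i + (k + m) from by ring, show i + k + m = i + (k + m) from by ring,
      ← Finsupp.single_sub]
    congr 1
    push_cast at h ⊢
    linear_combination (norm := module) h
  · intro s p j k
    apply Finsupp.lhom_ext; intro m u
    have h := LinearMap.congr_fun (hXX s p j k) u
    simp only [Ring.lie_def, LinearMap.sub_apply, Module.End.mul_apply] at h
    simp only [Ring.lie_def, LinearMap.sub_apply, Module.End.mul_apply, hX]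
    rw [show k + (j + m) = j + (k + m) from by ring, ← Finsupp.single_sub]
    rw [Finsupp.sum] at h ⊢
    rw [LinearMap.sum_apply]
    simp only [LinearMap.smul_apply, hX, Finsupp.smul_single,
      show j + k + m = j + (k + m) from by ring]
    rw [← Finsupp.single_finset_sum]
    congr 1
    simpa using h
  · intro i k
    apply Finsupp.lhom_ext; intro m u
    simp only [Ring.lie_def, LinearMap.sub_apply, Module.End.mul_apply, LinearMap.smul_apply,
      hT, hD, Finsupp.smul_single]
    rw [show k + (i + m) = i + (k + m) from by ring, show i + k + m = i + (k + m) from by ring,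
      ← Finsupp.single_sub]
    congr 1
    push_cast
    module
  · intro s j k
    apply Finsupp.lhom_ext; intro m u
    simp only [Ring.lie_def, LinearMap.sub_apply, Module.End.mul_apply, LinearMap.zero_apply,
      hT, hX]
    rw [show k + (j + m) = j + (k + m) from by ring, sub_self]
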